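/- Let K be a field, X ∈ Mat_n(K), and p, q ∈ K[x]. If q(p(X)) is similar to X, then Cent(X) = Cent(p(X)). -/

import Mathlib

/-- Two square matrices are similar if they are conjugate by an invertible matrix. -/
def Matrix.Similar {K : Type*} [Field K] {n : ℕ} (A B : Matrix (Fin n) (Fin n) K) : Prop :=
  ∃ g : (Matrix (Fin n) (Fin n) K)ˣ,
    (↑g⁻¹ : Matrix (Fin n) (Fin n) K) * A * (↑g : Matrix (Fin n) (Fin n) K) = B

/-- The centralizer of a matrix: all matrices commuting with it. -/
def Matrix.cent {K : Type*} [Field K] {n : ℕ} (X : Matrix (Fin n) (Fin n) K) :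
    Set (Matrix (Fin n) (Fin n) K) :=
  {W | W * X = X * W}

/-- Centralizer as a submodule. -/
def centS (K : Type*) [Field K] (n : ℕ) (A : Matrix (Fin n) (Fin n) K) :
    Submodule K (Matrix (Fin n) (Fin n) K) where
  carrier := Matrix.cent A
  add_mem' := by
    intro x y hx hy
    simp only [Matrix.cent, Set.mem_setOf_eq] at *
    rw [add_mul, mul_add, hx, hy]
  zero_mem' := by simp [Matrix.cent]
  smul_mem' := by
    intro c x hx
    simp only [Matrix.cent, Set.mem_setOf_eq] at *
    rw [smul_mul_assoc, mul_smul_comm, hx]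

theorem commute_aeval {K : Type*} [Field K] {n : ℕ}
    {W A : Matrix (Fin n) (Fin n) K} (h : W * A = A * W) (p : Polynomial K) :
    W * Polynomial.aeval A p = Polynomial.aeval A p * W := by
  induction p using Polynomial.induction_on' with
  | add f g hf hg => rw [map_add, mul_add, add_mul, hf, hg]
  | monomial k a =>
    rw [Polynomial.aeval_monomial]
    have h1 : Commute W (A ^ k) := (Commute.symm (h.symm : Commute A W)).pow_right k
    have h2 : Commute W (algebraMap K (Matrix (Fin n) (Fin n) K) a) :=
      (Algebra.commutes a W).symm
    exact (h2.mul_right h1).eq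

/-- If `q(p(X))` is similar to `X`, then `Cent(X) = Cent(p(X))`. -/
theorem cent_eq_cent_aeval_of_similar
    (K : Type*) [Field K] (n : ℕ) (X : Matrix (Fin n) (Fin n) K) (p q : Polynomial K)
    (h : (Polynomial.aeval (Polynomial.aeval X p) q).Similar X) :
    Matrix.cent X = Matrix.cent (Polynomial.aeval X p) := by
  obtain ⟨g, hg⟩ := h
  set A := Polynomial.aeval X p with hA
  set B := Polynomial.aeval A q with hB
  let e : Matrix (Fin n) (Fin n) K ≃ₗ[K] Matrix (Fin n) (Fin n) K :=
    { toFun := fun W => ↑g⁻¹ * W * ↑g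
      invFun := fun W => ↑g * W * ↑g⁻¹
      map_add' := by intro x y; simp only [mul_add, add_mul]
      map_smul' := by intro c x; simp [mul_smul_comm, smul_mul_assoc]
      left_inv := by
        intro x
        show (↑g : Matrix (Fin n) (Fin n) K) * ((↑g⁻¹ : Matrix (Fin n) (Fin n) K) * x * (↑g : Matrix (Fin n) (Fin n) K)) * (↑g⁻¹ : Matrix (Fin n) (Fin n) K) = x
        calc (↑g : Matrix (Fin n) (Fin n) K) * ((↑g⁻¹ : Matrix (Fin n) (Fin n) K) * x * (↑g : Matrix (Fin n) (Fin n) K)) * (↑g⁻¹ : Matrix (Fin n) (Fin n) K)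
            = ((↑g : Matrix (Fin n) (Fin n) K) * (↑g⁻¹ : Matrix (Fin n) (Fin n) K)) * x * ((↑g : Matrix (Fin n) (Fin n) K) * (↑g⁻¹ : Matrix (Fin n) (Fin n) K)) := by noncomm_ring
          _ = x := by rw [Units.mul_inv, one_mul, mul_one]
      right_inv := by
        intro x
        show (↑g⁻¹ : Matrix (Fin n) (Fin n) K) * ((↑g : Matrix (Fin n) (Fin n) K) * x * (↑g⁻¹ : Matrix (Fin n) (Fin n) K)) * (↑g : Matrix (Fin n) (Fin n) K) = x
        calc (↑g⁻¹ : Matrix (Fin n) (Fin n) K) * ((↑g : Matrix (Fin n) (Fin n) K) * x * (↑g⁻¹ : Matrix (Fin n) (Fin n) K)) * (↑g : Matrix (Fin n) (Fin n) K)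
            = ((↑g⁻¹ : Matrix (Fin n) (Fin n) K) * (↑g : Matrix (Fin n) (Fin n) K)) * x * ((↑g⁻¹ : Matrix (Fin n) (Fin n) K) * (↑g : Matrix (Fin n) (Fin n) K)) := by noncomm_ring
          _ = x := by rw [Units.inv_mul, one_mul, mul_one] }
  have h01 : centS K n X ≤ centS K n A := fun W hW => commute_aeval hW p
  have h12 : centS K n A ≤ centS K n B := fun W hW => commute_aeval hW q
  have hmap : (centS K n B).map e.toLinearMap ≤ centS K n X := by
    rintro W ⟨V, hV, rfl⟩
    have hV' : V * B = B * V := hV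
    show ((↑g⁻¹ : Matrix (Fin n) (Fin n) K) * V * (↑g : Matrix (Fin n) (Fin n) K)) * X = X * ((↑g⁻¹ : Matrix (Fin n) (Fin n) K) * V * (↑g : Matrix (Fin n) (Fin n) K))
    rw [← hg]
    calc (↑g⁻¹ : Matrix (Fin n) (Fin n) K) * V * (↑g : Matrix (Fin n) (Fin n) K) * ((↑g⁻¹ : Matrix (Fin n) (Fin n) K) * B * (↑g : Matrix (Fin n) (Fin n) K))
        = (↑g⁻¹ : Matrix (Fin n) (Fin n) K) * (V * ((↑g : Matrix (Fin n) (Fin n) K) * (↑g⁻¹ : Matrix (Fin n) (Fin n) K)) * B) * (↑g : Matrix (Fin n) (Fin n) K) := by noncomm_ring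
      _ = (↑g⁻¹ : Matrix (Fin n) (Fin n) K) * (V * B) * (↑g : Matrix (Fin n) (Fin n) K) := by rw [Units.mul_inv, mul_one]
      _ = (↑g⁻¹ : Matrix (Fin n) (Fin n) K) * (B * V) * (↑g : Matrix (Fin n) (Fin n) K) := by rw [hV']
      _ = (↑g⁻¹ : Matrix (Fin n) (Fin n) K) * (B * ((↑g : Matrix (Fin n) (Fin n) K) * (↑g⁻¹ : Matrix (Fin n) (Fin n) K)) * V) * (↑g : Matrix (Fin n) (Fin n) K) := by rw [Units.mul_inv, mul_one]
      _ = (↑g⁻¹ : Matrix (Fin n) (Fin n) K) * B * (↑g : Matrix (Fin n) (Fin n) K) * ((↑g⁻¹ : Matrix (Fin n) (Fin n) K) * V * (↑g : Matrix (Fin n) (Fin n) K)) := by noncomm_ring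
  have hchain : (centS K n A).map e.toLinearMap ≤ centS K n A :=
    le_trans (Submodule.map_mono h12) (le_trans hmap h01)
  have hfr : Module.finrank K ((centS K n A).map e.toLinearMap) = Module.finrank K (centS K n A) :=
    LinearEquiv.finrank_map_eq e (centS K n A)
  have heq : (centS K n A).map e.toLinearMap = centS K n A :=
    Submodule.eq_of_le_of_finrank_le hchain hfr.ge
  have hle : centS K n A ≤ centS K n X := heq ▸ le_trans (Submodule.map_mono h12) hmap
  have : centS K n X = centS K n A := le_antisymm h01 hle
  exact congrArg SetLike.coe this
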